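/- Let {K_n}_{n∈ℤ} be i.i.d. ℕ+-valued random variables and consider the random graph on ℤ with edge set {{n, n − K_n} : n ∈ ℤ}. The number N of connected components of this graph is measurable with respect to the left tail σ-algebra ⋂_m σ(K_i : i ≤ m), and hence N is almost surely constant. -/

import Mathlib

open MeasureTheory ProbabilityTheory Filter

section Aux

/-- Orbit equivalence: EqvGen of the graph of a function. -/
lemma eqvGen_graph {α : Type*} (f : α → α) (a b : α) :
    Relation.EqvGen (fun a b => b = f a) a b ↔ ∃ i j, f^[i] a = f^[j] b := by
  constructor
  · intro h
    induction h with
    | rel x y hxy => exact ⟨1, 0, by simp [hxy]⟩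
    | refl x => exact ⟨0, 0, rfl⟩
    | symm x y _ ih => obtain ⟨i, j, h⟩ := ih; exact ⟨j, i, h.symm⟩
    | trans x y z _ _ ih1 ih2 =>
      obtain ⟨i, j, h1⟩ := ih1
      obtain ⟨k, l, h2⟩ := ih2
      refine ⟨k + i, j + l, ?_⟩
      rw [Function.iterate_add_apply f k i x, h1, ← Function.iterate_add_apply,
        Nat.add_comm k j, Function.iterate_add_apply f j k y, h2,
        ← Function.iterate_add_apply]
  · rintro ⟨i, j, h⟩
    have key : ∀ n (x : α), Relation.EqvGen (fun a b => b = f a) x (f^[n] x) := by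
      intro n
      induction n with
      | zero => intro x; exact Relation.EqvGen.refl x
      | succ n ih =>
        intro x
        refine Relation.EqvGen.trans _ _ _ (ih x) ?_
        rw [Function.iterate_succ_apply']
        exact Relation.EqvGen.rel _ _ rfl
    refine Relation.EqvGen.trans _ _ _ (key i a) ?_
    rw [h]
    exact (key j b).symm _ _

variable (m : ℤ)

/-- Restricted step map on `(-∞, m]`. -/
def Gm (κ' : {i : ℤ // i ≤ m} → ℕ) : {i : ℤ // i ≤ m} → {i : ℤ // i ≤ m} :=
  fun s => ⟨s.1 - (κ' s : ℤ), by have : (0:ℤ) ≤ (κ' s : ℤ) := Int.natCast_nonneg _; omega⟩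

/-- Orbit equivalence of the restricted step map. -/
def rm (κ' : {i : ℤ // i ≤ m} → ℕ) (a b : {i : ℤ // i ≤ m}) : Prop :=
  ∃ i j, (Gm m κ')^[i] a = (Gm m κ')^[j] b

lemma rm_equivalence (κ' : {i : ℤ // i ≤ m} → ℕ) : Equivalence (rm m κ') := by
  constructor
  · intro x; exact ⟨0, 0, rfl⟩
  · rintro x y ⟨i, j, h⟩; exact ⟨j, i, h.symm⟩
  · rintro x y z ⟨i, j, h1⟩ ⟨k, l, h2⟩
    refine ⟨k + i, j + l, ?_⟩
    rw [Function.iterate_add_apply _ k i x, h1, ← Function.iterate_add_apply,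
      Nat.add_comm k j, Function.iterate_add_apply _ j k y, h2,
      ← Function.iterate_add_apply]

/-- Number of components of the restricted graph. -/
noncomputable def Fm (κ' : {i : ℤ // i ≤ m} → ℕ) : ℕ∞ :=
  Cardinal.toENat (Cardinal.mk (Quot (rm m κ')))

-- measurability of iterate evaluation
lemma meas_Gm_comp {h : ({i : ℤ // i ≤ m} → ℕ) → {i : ℤ // i ≤ m}} (hh : Measurable h) :
    Measurable fun κ' => Gm m κ' (h κ') := by
  apply measurable_to_countable'
  intro t
  have heq : (fun κ' => Gm m κ' (h κ')) ⁻¹' {t}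
      = ⋃ s : {i : ℤ // i ≤ m}, (h ⁻¹' {s}) ∩ {κ' | Gm m κ' s = t} := by
    ext κ'
    simp only [Set.mem_preimage, Set.mem_singleton_iff, Set.mem_iUnion, Set.mem_inter_iff,
      Set.mem_setOf_eq]
    constructor
    · intro hx; exact ⟨h κ', rfl, hx⟩
    · rintro ⟨s, rfl, hx⟩; exact hx
  rw [heq]
  refine MeasurableSet.iUnion fun s => (hh (measurableSet_singleton _)).inter ?_
  have : {κ' : {i : ℤ // i ≤ m} → ℕ | Gm m κ' s = t}
      = (fun κ' : {i : ℤ // i ≤ m} → ℕ => κ' s) ⁻¹' {n : ℕ | s.1 - (n : ℤ) = t.1 } := by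
    ext κ'
    simp only [Set.mem_setOf_eq, Set.mem_preimage]
    constructor
    · intro hx; exact congrArg Subtype.val hx
    · intro hx; exact Subtype.ext hx
  rw [this]
  exact measurable_pi_apply s ((Set.to_countable _).measurableSet)

lemma meas_Gm_iter (i : ℕ) (x : {i : ℤ // i ≤ m}) :
    Measurable fun κ' => (Gm m κ')^[i] x := by
  induction i with
  | zero => exact measurable_const
  | succ i ih =>
    have : (fun κ' => (Gm m κ')^[i+1] x) = fun κ' => Gm m κ' ((Gm m κ')^[i] x) := by
      funext κ'; rw [Function.iterate_succ_apply']
    rw [this]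
    exact meas_Gm_comp m ih

lemma meas_rm (x y : {i : ℤ // i ≤ m}) : MeasurableSet {κ' | rm m κ' x y} := by
  have : {κ' | rm m κ' x y}
      = ⋃ i : ℕ, ⋃ j : ℕ, ⋃ s : {i : ℤ // i ≤ m},
        ((fun κ' => (Gm m κ')^[i] x) ⁻¹' {s}) ∩ ((fun κ' => (Gm m κ')^[j] y) ⁻¹' {s}) := by
    ext κ'
    simp only [Set.mem_setOf_eq, Set.mem_iUnion, Set.mem_inter_iff, Set.mem_preimage,
      Set.mem_singleton_iff, rm]
    constructor
    · rintro ⟨i, j, h⟩; exact ⟨i, j, _, rfl, h.symm⟩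
    · rintro ⟨i, j, s, h1, h2⟩; exact ⟨i, j, h1.trans h2.symm⟩
  rw [this]
  exact .iUnion fun i => .iUnion fun j => .iUnion fun s =>
    ((meas_Gm_iter m i x) (measurableSet_singleton s)).inter
      ((meas_Gm_iter m j y) (measurableSet_singleton s))

-- cardinality ≥ k characterization
lemma natCast_le_Fm (k : ℕ) (κ' : {i : ℤ // i ≤ m} → ℕ) :
    (k : ℕ∞) ≤ Fm m κ' ↔
      ∃ f : Fin k → {i : ℤ // i ≤ m}, ∀ p q, p ≠ q → ¬ rm m κ' (f p) (f q) := by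
  rw [Fm, Cardinal.natCast_le_toENat_iff, ← Cardinal.mk_fin k, Cardinal.le_def]
  constructor
  · rintro ⟨e⟩
    refine ⟨fun p => (e p).out, fun p q hpq hr => hpq ?_⟩
    apply e.injective
    rw [← Quot.out_eq (e p), ← Quot.out_eq (e q)]
    exact Quot.sound hr
  · rintro ⟨f, hf⟩
    refine ⟨⟨fun p => Quot.mk _ (f p), fun p q h => ?_⟩⟩
    by_contra hpq
    exact hf p q hpq (((rm_equivalence m κ').eqvGen_iff).1 (Quot.eqvGen_exact h))

lemma meas_Fm_ge (k : ℕ) : MeasurableSet {κ' | (k : ℕ∞) ≤ Fm m κ'} := by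
  have : {κ' | (k : ℕ∞) ≤ Fm m κ'}
      = ⋃ f : Fin k → {i : ℤ // i ≤ m},
        ⋂ p, ⋂ q, ⋂ (_ : p ≠ q), {κ' | rm m κ' (f p) (f q)}ᶜ := by
    ext κ'
    simp only [Set.mem_setOf_eq, Set.mem_iUnion, Set.mem_iInter, Set.mem_compl_iff,
      natCast_le_Fm]
  rw [this]
  exact .iUnion fun f => .iInter fun p => .iInter fun q => .iInter fun _ =>
    (meas_rm m _ _).compl

lemma enat_eq_iff (c : ℕ∞) (x : ℕ∞) :
    x = c ↔ (match c with
      | ⊤ => ∀ k : ℕ, (k : ℕ∞) ≤ x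
      | (n : ℕ) => (n : ℕ∞) ≤ x ∧ ¬ ((n+1 : ℕ) : ℕ∞) ≤ x) := by
  cases c with
  | top =>
    constructor
    · rintro rfl; intro k; exact le_top
    · intro h
      by_contra hx
      obtain ⟨n, rfl⟩ : ∃ n : ℕ, x = n := by
        cases x with
        | top => exact absurd rfl hx
        | coe n => exact ⟨n, rfl⟩
      have := h (n+1)
      rw [Nat.cast_le] at this
      omega
  | coe n =>
    cases x with
    | top => simp
    | coe k =>
      simp only [Nat.cast_le, Nat.cast_inj]
      constructor
      · rintro rfl; omega
      · rintro ⟨h1, h2⟩; omega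

lemma meas_Fm_eq (c : ℕ∞) : MeasurableSet {κ' | Fm m κ' = c} := by
  cases c with
  | top =>
    have : {κ' | Fm m κ' = ⊤} = ⋂ k : ℕ, {κ' | (k : ℕ∞) ≤ Fm m κ'} := by
      ext κ'
      simp only [Set.mem_setOf_eq, Set.mem_iInter, enat_eq_iff]
      exact Iff.rfl
    rw [this]
    exact .iInter fun k => meas_Fm_ge m k
  | coe n =>
    have : {κ' | Fm m κ' = (n : ℕ∞)}
        = {κ' | ((n:ℕ) : ℕ∞) ≤ Fm m κ'} ∩ {κ' | (((n+1 : ℕ)) : ℕ∞) ≤ Fm m κ'}ᶜ := by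
      ext κ'
      simp only [Set.mem_setOf_eq, Set.mem_inter_iff, Set.mem_compl_iff, enat_eq_iff]
    rw [this]
    exact (meas_Fm_ge m n).inter (meas_Fm_ge m (n+1)).compl

end Aux

/-- Edge relation of the random graph on `ℤ`: an arc from `a` to `a - κ a`. -/
def graphRel (κ : ℤ → ℕ) : ℤ → ℤ → Prop := fun a b => b = a - (κ a : ℤ)

/-- Number of connected components (in `ℕ∞`) of the graph on `ℤ` with edges
`{a, a - κ a}`. -/
noncomputable def numComp (κ : ℤ → ℕ) : ℕ∞ :=
  Cardinal.toENat (Cardinal.mk (Quot (Relation.EqvGen (graphRel κ))))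

section Factor

variable (m : ℤ) (κ : ℤ → ℕ)

/-- The step map on `ℤ`. -/
def gstep : ℤ → ℤ := fun a => a - (κ a : ℤ)

lemma gstep_iter_le (hpos : ∀ n, 0 < κ n) : ∀ (t : ℕ) (a : ℤ), (gstep κ)^[t] a ≤ a - t := by
  intro t
  induction t with
  | zero => intro a; simp
  | succ t ih =>
    intro a
    rw [Function.iterate_succ_apply']
    have h1 := ih a
    have h2 : 0 < κ ((gstep κ)^[t] a) := hpos _
    have : gstep κ ((gstep κ)^[t] a) = (gstep κ)^[t] a - (κ ((gstep κ)^[t] a) : ℤ) := rfl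
    push_cast
    omega

/-- First-entrance time exponent. -/
def tEnt (a : ℤ) : ℕ := (a - m).toNat

lemma phi_le (hpos : ∀ n, 0 < κ n) (a : ℤ) : (gstep κ)^[tEnt m a] a ≤ m := by
  have h := gstep_iter_le κ hpos (tEnt m a) a
  unfold tEnt at h ⊢
  omega

/-- Iterates of `Gm` project to iterates of `gstep`. -/
lemma Gm_iter_val (i : ℕ) (s : {x : ℤ // x ≤ m}) :
    ((Gm m (fun i => κ i.1))^[i] s).1 = (gstep κ)^[i] s.1 := by
  induction i with
  | zero => rfl
  | succ i ih =>
    rw [Function.iterate_succ_apply', Function.iterate_succ_apply']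
    show ((Gm m (fun i => κ i.1))^[i] s).1 - ((fun i : {x : ℤ // x ≤ m} => κ i.1) ((Gm m (fun i => κ i.1))^[i] s) : ℤ) = _
    have hv : (fun i : {x : ℤ // x ≤ m} => κ i.1) ((Gm m (fun i => κ i.1))^[i] s) = κ ((gstep κ)^[i] s.1) := by
      show κ ((Gm m (fun i => κ i.1))^[i] s).1 = _
      rw [ih]
    rw [ih, hv]
    rfl

lemma factor_eq (hpos : ∀ n, 0 < κ n) : numComp κ = Fm m (fun i => κ i.1) := by
  set g := gstep κ with hg
  set κ' : {i : ℤ // i ≤ m} → ℕ := fun i => κ i.1 with hκ'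
  have hgr : graphRel κ = fun a b => b = g a := rfl
  -- φ
  set φ : ℤ → {i : ℤ // i ≤ m} := fun a => ⟨g^[tEnt m a] a, phi_le m κ hpos a⟩ with hφ
  have horb : ∀ a b : ℤ, (∃ i j, g^[i] a = g^[j] b) ↔ rm m κ' (φ a) (φ b) := by
    intro a b
    have hval : ∀ (i : ℕ) (s : {x : ℤ // x ≤ m}), ((Gm m κ')^[i] s).1 = g^[i] s.1 :=
      fun i s => Gm_iter_val m κ i s
    constructor
    · rintro ⟨i, j, h⟩
      refine ⟨tEnt m b + i, tEnt m a + j, Subtype.ext ?_⟩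
      rw [hval, hval]
      show g^[tEnt m b + i] (g^[tEnt m a] a) = g^[tEnt m a + j] (g^[tEnt m b] b)
      rw [← Function.iterate_add_apply, ← Function.iterate_add_apply,
        show tEnt m b + i + tEnt m a = tEnt m b + tEnt m a + i by omega,
        show tEnt m a + j + tEnt m b = tEnt m b + tEnt m a + j by omega,
        Function.iterate_add_apply g _ i, h, ← Function.iterate_add_apply]
    · rintro ⟨i, j, h⟩
      have h' : g^[i] (g^[tEnt m a] a) = g^[j] (g^[tEnt m b] b) := by
        have := congrArg Subtype.val h
        rwa [hval, hval] at this
      exact ⟨i + tEnt m a, j + tEnt m b,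
        by rwa [Function.iterate_add_apply, Function.iterate_add_apply]⟩
  have hR1 : ∀ a b : ℤ, Relation.EqvGen (graphRel κ) a b ↔ ∃ i j, g^[i] a = g^[j] b := by
    intro a b; rw [hgr]; exact eqvGen_graph g a b
  -- the equivalence of quotients
  have e : Quot (Relation.EqvGen (graphRel κ)) ≃ Quot (rm m κ') := by
    refine ⟨Quot.map φ ?_, Quot.map Subtype.val ?_, ?_, ?_⟩
    · intro a b hab
      exact (horb a b).1 ((hR1 a b).1 hab)
    · rintro s t hst
      refine (hR1 s.1 t.1).2 ?_
      obtain ⟨i, j, h⟩ := hst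
      have := congrArg Subtype.val h
      rw [Gm_iter_val, Gm_iter_val] at this
      exact ⟨i, j, this⟩
    · intro q
      induction q using Quot.inductionOn with
      | h a =>
        show Quot.mk _ (φ a).1 = Quot.mk _ a
        apply Quot.sound
        refine (hR1 _ _).2 ⟨0, tEnt m a, rfl⟩
    · intro q
      induction q using Quot.inductionOn with
      | h s =>
        show Quot.mk _ (φ s.1) = Quot.mk _ s
        have hts : tEnt m s.1 = 0 := by
          have := s.2; simp [tEnt]; omega
        congr 1
        apply Subtype.ext
        show g^[tEnt m s.1] s.1 = s.1
        rw [hts]; rfl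
  unfold numComp Fm
  rw [Cardinal.mk_congr e]

end Factor

/-- `Fm` is measurable into the top σ-algebra on `ℕ∞`. -/
lemma Fm_meas_top (m : ℤ) : @Measurable _ ℕ∞ _ ⊤ (Fm m) := by
  intro s _
  have : Fm m ⁻¹' s = ⋃ c ∈ s, Fm m ⁻¹' {c} := by
    ext κ'; simp
  rw [this]
  exact MeasurableSet.biUnion s.to_countable fun c _ => meas_Fm_eq m c

/-- The left tail σ-algebra of the family `K`. -/
def tailSigma {Ω : Type*} [MeasurableSpace Ω] (K : ℤ → Ω → ℕ) : MeasurableSpace Ω :=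
  ⨅ m : ℤ, ⨆ i : {i : ℤ // i ≤ m}, MeasurableSpace.comap (K i.1) inferInstance

lemma meas_level {Ω : Type*} (m : ℤ) (K : ℤ → Ω → ℕ) (hpos : ∀ n ω, 0 < K n ω) :
    @Measurable Ω ℕ∞ (⨆ i : {i : ℤ // i ≤ m}, MeasurableSpace.comap (K i.1) inferInstance) ⊤
      fun ω => numComp fun n => K n ω := by
  letI mΩ : MeasurableSpace Ω :=
    ⨆ i : {i : ℤ // i ≤ m}, MeasurableSpace.comap (K i.1) inferInstance
  have hfac : (fun ω => numComp fun n => K n ω)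
      = Fm m ∘ fun ω (i : {i : ℤ // i ≤ m}) => K i.1 ω := by
    funext ω
    exact factor_eq m (fun n => K n ω) (fun n => hpos n ω)
  rw [hfac]
  have hπ : Measurable fun ω (i : {i : ℤ // i ≤ m}) => K i.1 ω := by
    refine measurable_pi_lambda _ fun i => ?_
    have h1 : @Measurable Ω ℕ (MeasurableSpace.comap (K i.1) inferInstance) _ (K i.1) :=
      fun s hs => ⟨s, hs, rfl⟩
    exact h1.mono (le_iSup (fun i : {i : ℤ // i ≤ m} =>
      MeasurableSpace.comap (K i.1) inferInstance) i) le_rfl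
  intro s hs
  exact hπ (Fm_meas_top m hs)

/-- For i.i.d. positive-integer-valued `{K n}`, the number of connected components of
the random graph on `ℤ` with edges `{n, n - K n}` is measurable with respect to the
left tail σ-algebra, and hence almost surely constant. -/
theorem numComponents_tail_measurable_and_as_constant
    {Ω : Type*} [MeasurableSpace Ω] (P : Measure Ω) [IsProbabilityMeasure P]
    (K : ℤ → Ω → ℕ) (hmeas : ∀ n, Measurable (K n)) (hpos : ∀ n ω, 0 < K n ω)
    (hindep : iIndepFun K P)
    (hident : ∀ n : ℤ, P.map (K n) = P.map (K 0)) :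
    (@Measurable Ω ℕ∞ (tailSigma K) ⊤ fun ω => numComp fun n => K n ω) ∧
      ∃ c : ℕ∞, ∀ᵐ ω ∂P, numComp (fun n => K n ω) = c := by
  have hlevel : ∀ m : ℤ,
      @Measurable Ω ℕ∞ (⨆ i : {i : ℤ // i ≤ m}, MeasurableSpace.comap (K i.1) inferInstance) ⊤
        fun ω => numComp fun n => K n ω := by
    intro m
    exact meas_level m K hpos
  have hTail : @Measurable Ω ℕ∞ (tailSigma K) ⊤ fun ω => numComp fun n => K n ω := by
    intro s hs
    rw [tailSigma, MeasurableSpace.measurableSet_iInf]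
    intro m
    exact hlevel m hs
  refine ⟨hTail, ?_⟩
  -- tailSigma = limsup at atBot
  have hlimsup : limsup (fun i : ℤ => MeasurableSpace.comap (K i) inferInstance) atBot
      = tailSigma K := by
    rw [atBot_basis.limsup_eq_iInf_iSup, tailSigma]
    simp only [iInf_true]
    congr 1
    funext m
    rw [iSup_subtype']
    rfl
  have h01 : ∀ c : ℕ∞, P {ω | numComp (fun n => K n ω) = c} = 0
      ∨ P {ω | numComp (fun n => K n ω) = c} = 1 := by
    intro c
    refine measure_zero_or_one_of_measurableSet_limsup_atBot
      (fun i => (hmeas i).comap_le) hindep ?_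
    rw [hlimsup]
    exact hTail (MeasurableSpace.measurableSet_top (s := {c}))
  have hmeasset : ∀ c : ℕ∞, MeasurableSet {ω | numComp (fun n => K n ω) = c} := by
    intro c
    have hle : tailSigma K ≤ ‹MeasurableSpace Ω› :=
      le_trans (iInf_le _ 0) (iSup_le fun i => (hmeas i.1).comap_le)
    exact hle _ (hTail (MeasurableSpace.measurableSet_top (s := {c})))
  have hex : ∃ c : ℕ∞, P {ω | numComp (fun n => K n ω) = c} ≠ 0 := by
    by_contra hcon
    push_neg at hcon
    have h0 : P Set.univ = 0 := by
      have : (Set.univ : Set Ω) = ⋃ c : ℕ∞, {ω | numComp (fun n => K n ω) = c} := by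
        ext ω; simp
      rw [this]
      exact measure_iUnion_null fun c => hcon c
    simp at h0
  obtain ⟨c, hc⟩ := hex
  have hc1 : P {ω | numComp (fun n => K n ω) = c} = 1 := (h01 c).resolve_left hc
  refine ⟨c, ?_⟩
  rw [ae_iff]
  have : {ω | ¬ numComp (fun n => K n ω) = c} = {ω | numComp (fun n => K n ω) = c}ᶜ := rfl
  rw [this, measure_compl (hmeasset c) (by simp), hc1]
  simp
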